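/- Let Σⁿ ⊂ 𝔹^{2n} be a Lagrangian submanifold with Legendrian boundary ∂Σⁿ ⊂ S^{2n-1} and contact angle θ, with ν the outward conormal. Then for all tangent vectors X, Y ∈ T∂Σⁿ: (i) the second fundamental form of ∂Σⁿ in Σⁿ is B^Σ(X,Y) = -sin θ ⟨X,Y⟩ ν, and (ii) ⟨B(X,Y), Jν⟩ = cos θ ⟨X,Y⟩, where B is the second fundamental form of Σⁿ in 𝔹^{2n}. -/

import Mathlib

/-- formulated along curves in the Legendrian boundary: let `c` be a curve
in `∂Σⁿ ⊂ S^{2n-1} ⊂ ℂⁿ` (so `‖c t‖ = 1`), Legendrian (`⟨c', Jc⟩_ℝ = 0`), and let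
`ν = sin θ · c + cos θ · Jc` be the conormal along `c`, `θ` the contact angle. Then
(i) `⟨B^Σ(X,X), ν⟩ = ⟨c'', ν⟩ = -sin θ |X|²` where `X = c'`, i.e. `B^Σ(X,Y) = -sin θ ⟨X,Y⟩ ν`,
and (ii) `⟨B(X,X), Jν⟩ = ⟨c'', Jν⟩ = cos θ |X|²`. -/
theorem stmt17 (n : ℕ) (c : ℝ → EuclideanSpace ℂ (Fin n)) (θ : ℝ → ℝ)
    (hc : ContDiff ℝ 2 c) (hθ : Differentiable ℝ θ)
    (hsphere : ∀ t, ‖c t‖ = 1)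
    (hLeg : ∀ t, ((inner ℂ (deriv c t) (Complex.I • c t) : ℂ)).re = 0)
    (ν : ℝ → EuclideanSpace ℂ (Fin n))
    (hν : ∀ t, ν t = Real.sin (θ t) • c t + Real.cos (θ t) • (Complex.I • c t)) :
    ∀ t : ℝ,
      ((inner ℂ (deriv (deriv c) t) (ν t) : ℂ)).re = -Real.sin (θ t) * ‖deriv c t‖ ^ 2 ∧
      ((inner ℂ (deriv (deriv c) t) (Complex.I • ν t) : ℂ)).re =
        Real.cos (θ t) * ‖deriv c t‖ ^ 2 := by
  have hdc : Differentiable ℝ c := hc.differentiable two_ne_zero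
  have hdc' : Differentiable ℝ (deriv c) := by
    have h2 : ContDiff ℝ ((1 : ℕ) + 1) c := by exact_mod_cast hc
    exact ((contDiff_succ_iff_deriv.mp h2).2.2).differentiable one_ne_zero
  -- Re ⟪c', c⟫ = 0 from ‖c‖ = 1
  have h1 : ∀ t, ((inner ℂ (deriv c t) (c t) : ℂ)).re = 0 := by
    intro t
    have hd := ((hdc t).hasDerivAt).inner ℂ ((hdc t).hasDerivAt)
    have hconst : (fun s => (inner ℂ (c s) (c s) : ℂ)) = fun _ => (1 : ℂ) := by
      funext s
      rw [inner_self_eq_norm_sq_to_K, hsphere s]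
      norm_num
    rw [hconst] at hd
    have h0 := hd.unique (hasDerivAt_const t (1 : ℂ))
    have h0' := congrArg Complex.re h0
    rw [← inner_conj_symm (c t) (deriv c t)] at h0'
    simp only [Complex.add_re, Complex.conj_re, Complex.zero_re] at h0'
    linarith
  -- Re ⟪c'', c⟫ = -‖c'‖²
  have hA : ∀ t, ((inner ℂ (deriv (deriv c) t) (c t) : ℂ)).re = -‖deriv c t‖ ^ 2 := by
    intro t
    have hd := ((hdc' t).hasDerivAt).inner ℂ ((hdc t).hasDerivAt)
    have hre := Complex.reCLM.hasFDerivAt.comp_hasDerivAt t hd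
    have hconst : (Complex.reCLM ∘ fun s => (inner ℂ (deriv c s) (c s) : ℂ)) = fun _ => (0 : ℝ) := by
      funext s; exact h1 s
    rw [hconst] at hre
    have h0 := hre.unique (hasDerivAt_const t (0 : ℝ))
    have hself : ((inner ℂ (deriv c t) (deriv c t) : ℂ)).re = ‖deriv c t‖ ^ 2 := by
      rw [inner_self_eq_norm_sq_to_K]
      norm_cast
    simp only [ContinuousLinearMap.coe_coe, Complex.reCLM_apply, Complex.add_re] at h0
    rw [hself] at h0
    linarith
  -- Re ⟪c'', I•c⟫ = 0
  have hB : ∀ t, ((inner ℂ (deriv (deriv c) t) (Complex.I • c t) : ℂ)).re = 0 := by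
    intro t
    have hIc : HasDerivAt (fun s => Complex.I • c s) (Complex.I • deriv c t) t :=
      ((hdc t).hasDerivAt).const_smul Complex.I
    have hd := ((hdc' t).hasDerivAt).inner ℂ hIc
    have hre := Complex.reCLM.hasFDerivAt.comp_hasDerivAt t hd
    have hconst : (Complex.reCLM ∘ fun s => (inner ℂ (deriv c s) (Complex.I • c s) : ℂ)) =
        fun _ => (0 : ℝ) := by
      funext s; exact hLeg s
    rw [hconst] at hre
    have h0 := hre.unique (hasDerivAt_const t (0 : ℝ))
    have hself : (inner ℂ (deriv c t) (Complex.I • deriv c t) : ℂ) =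
        Complex.I * inner ℂ (deriv c t) (deriv c t) := inner_smul_right _ _ _
    have him : ((inner ℂ (deriv c t) (deriv c t) : ℂ)).im = 0 := by
      simpa using inner_self_im (𝕜 := ℂ) (deriv c t)
    simp only [ContinuousLinearMap.coe_coe, Complex.reCLM_apply, Complex.add_re, hself,
      Complex.mul_re, Complex.I_re, Complex.I_im, him] at h0
    linarith
  intro t
  have hIν : Complex.I • ν t =
      Real.sin (θ t) • (Complex.I • c t) + (-Real.cos (θ t)) • c t := by
    rw [hν t]
    have : Complex.I • (Complex.I • c t) = (-1 : ℝ) • c t := by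
      rw [smul_smul, Complex.I_mul_I]
      norm_num
    rw [smul_add, smul_comm Complex.I (Real.sin (θ t)), smul_comm Complex.I (Real.cos (θ t)), this,
      smul_smul]
    norm_num
  have himA : ((inner ℂ (deriv (deriv c) t) (c t) : ℂ)).im = 0 := by
    have hb := hB t
    rw [inner_smul_right] at hb
    simp only [Complex.mul_re, Complex.I_re, Complex.I_im] at hb
    linarith
  constructor
  · rw [hν t]
    simp only [← algebraMap_smul ℂ (Real.sin (θ t)), ← algebraMap_smul ℂ (Real.cos (θ t)),
      Complex.coe_algebraMap, inner_add_right, inner_smul_right, Complex.add_re, Complex.mul_re,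
      Complex.ofReal_re, Complex.ofReal_im, Complex.I_re, Complex.I_im, hA t, hB t, himA]
    ring
  · rw [hIν]
    simp only [← algebraMap_smul ℂ (Real.sin (θ t)), ← algebraMap_smul ℂ (-Real.cos (θ t)),
      Complex.coe_algebraMap, inner_add_right, inner_smul_right, Complex.add_re, Complex.mul_re,
      Complex.ofReal_re, Complex.ofReal_im, Complex.I_re, Complex.I_im, hA t, hB t, himA]
    ring
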